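/- Define f(m,n,d) = kₘ·c₁(n;d)³ + bₘ·c₁(n;d)·c₂(n;d) - c₃(n;d), where kₘ = (-28m + m² + 4m³ - m⁴)/((m-4)(m-3)(3m² - 5m - 20)) and bₘ = (-120 + 254m + 3m² - 50m³ + 9m⁴)/(3(m-4)(m-3)(3m² - 5m - 20)). Then f(m,n,d) ≥ 0 whenever either (1) m, n are positive integers, d is a real with d ≥ 1, n·d is an integer with n·d ≥ 5, and m ≥ 10; or (2) m ∈ {6,7,8,9}, n is a positive integer, d is a real with d ≥ 1, and n·d is an integer with n·d ≥ 11. -/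

import Mathlib

/-- For `n` hypersurfaces all of degree `d + 1`: `s_j = n·dʲ`, `c₁(n;d) = 4 - s₁`. -/
def chernEq1 (n : ℕ) (d : ℝ) : ℝ := 4 - (n : ℝ) * d

/-- `c₂(n;d) = (s₁² + s₂)/2 - 3(s₁ - 2)` with `s_j = n·dʲ`. -/
noncomputable def chernEq2 (n : ℕ) (d : ℝ) : ℝ :=
  (((n : ℝ) * d) ^ 2 + (n : ℝ) * d ^ 2) / 2 - 3 * ((n : ℝ) * d - 2)

/-- `c₃(n;d) = -(s₁³ + 3s₁s₂ + 2s₃)/6 + (s₁² + s₂) - 3s₁ + 4` with `s_j = n·dʲ`. -/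
noncomputable def chernEq3 (n : ℕ) (d : ℝ) : ℝ :=
  -(((n : ℝ) * d) ^ 3 + 3 * ((n : ℝ) * d) * ((n : ℝ) * d ^ 2) + 2 * ((n : ℝ) * d ^ 3)) / 6
    + (((n : ℝ) * d) ^ 2 + (n : ℝ) * d ^ 2) - 3 * ((n : ℝ) * d) + 4

/-- The slope `kₘ` of the line through `Q(m;1,…,1)` and `Q(m+1;1,…,1)` for `m ≥ 6`. -/
noncomputable def kGen (m : ℕ) : ℝ :=
  (-28 * (m : ℝ) + (m : ℝ) ^ 2 + 4 * (m : ℝ) ^ 3 - (m : ℝ) ^ 4) /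
    (((m : ℝ) - 4) * ((m : ℝ) - 3) * (3 * (m : ℝ) ^ 2 - 5 * (m : ℝ) - 20))

/-- The intercept `bₘ` of the line through `Q(m;1,…,1)` and `Q(m+1;1,…,1)` for `m ≥ 6`. -/
noncomputable def bGen (m : ℕ) : ℝ :=
  (-120 + 254 * (m : ℝ) + 3 * (m : ℝ) ^ 2 - 50 * (m : ℝ) ^ 3 + 9 * (m : ℝ) ^ 4) /
    (3 * ((m : ℝ) - 4) * ((m : ℝ) - 3) * (3 * (m : ℝ) ^ 2 - 5 * (m : ℝ) - 20))


set_option maxHeartbeats 1000000 in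
private lemma Pnn (p u : ℝ) (hp : 0 ≤ p) (hu : 0 ≤ u) :
    (0:ℝ) ≤ (7756053749740800000 * p ^ 0 + 38715288855143040000 * p ^ 1 + 63522856277449344000 * p ^ 2 + 56881688637563596800 * p ^ 3 + 33171056846246764800 * p ^ 4 + 13739525976125880960 * p ^ 5 + 4247170698312151680 * p ^ 6 + 1009887698417958528 * p ^ 7 + 188190792375743784 * p ^ 8 + 27781292241230964 * p ^ 9 + 3264048270677316 * p ^ 10 + 304986110822544 * p ^ 11 + 22521100562880 * p ^ 12 + 1297536345048 * p ^ 13 + 57078626136 * p ^ 14 + 1850662992 * p ^ 15 + 41658936 * p ^ 16 + 581076 * p ^ 17 + 3780 * p ^ 18) * u ^ 0 + (38144551505760000 * p ^ 0 + 70049237947776000 * p ^ 1 + 59246568623246400 * p ^ 2 + 30586433268987840 * p ^ 3 + 10766487024825360 * p ^ 4 + 2733159205816224 * p ^ 5 + 515944485721788 * p ^ 6 + 73563583152732 * p ^ 7 + 7959671707248 * p ^ 8 + 650311249812 * p ^ 9 + 39485918064 * p ^ 10 + 1727586372 * p ^ 11 + 51480336 * p ^ 12 + 935148 * p ^ 13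 + 7812 * p ^ 14) * u ^ 1 + (2206215630000 * p ^ 0 + 2790100882800 * p ^ 1 + 1570756965360 * p ^ 2 + 518141760868 * p ^ 3 + 110851209297 * p ^ 4 + 16063959576 * p ^ 5 + 1596198954 * p ^ 6 + 107344188 * p ^ 7 + 4674237 * p ^ 8 + 118976 * p ^ 9 + 1344 * p ^ 10) * u ^ 2 + (30469500 * p ^ 0 + 21530700 * p ^ 1 + 6194531 * p ^ 2 + 927198 * p ^ 3 + 76055 * p ^ 4 + 3240 * p ^ 5 + 56 * p ^ 6) * u ^ 3 := by
  have h0 : (0:ℝ) ≤ u ^ 0 := by norm_num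
  have h1 : (0:ℝ) ≤ u ^ 1 := by positivity
  have h2 : (0:ℝ) ≤ u ^ 2 := by positivity
  have h3 : (0:ℝ) ≤ u ^ 3 := by positivity
  repeat' apply add_nonneg
  all_goals apply mul_nonneg
  all_goals repeat' apply add_nonneg
  all_goals first
    | assumption
    | exact mul_nonneg (by norm_num) (pow_nonneg hp _)

private lemma posAux (c k : ℝ) (hc : 0 < c) (h : 0 ≤ c * k) : 0 ≤ k := by
  nlinarith [hc, h]

set_option maxHeartbeats 4000000 in
private lemma Kcert (a x : ℝ) (ha : 10 ≤ a) (hs : (15*a^4-74*a^3-45*a^2+428*a+(-14*a^3+75*a^2-7*a-300)*x) ≤ 0) :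
    (0:ℝ) ≤ (12*((x-a)*(x-a-1))*((7*a^2-a-20)*(x-a)+7*a^3-5*a^2-56*a-80)*(3*a^4-26*a^3+51*a^2+80*a-240)-x*(15*a^4-74*a^3-45*a^2+428*a+(-14*a^3+75*a^2-7*a-300)*x)^2) := by
  have hp : (0:ℝ) ≤ a - 10 := by linarith
  have hu : (0:ℝ) ≤ -(15*a^4-74*a^3-45*a^2+428*a+(-14*a^3+75*a^2-7*a-300)*x) := by linarith
  have hnh : (0:ℝ) < 14*a^3-75*a^2+7*a+300 := by
    nlinarith [sq_nonneg (a-10), pow_nonneg hp 3]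
  have hP := Pnn (a - 10) (-(15*a^4-74*a^3-45*a^2+428*a+(-14*a^3+75*a^2-7*a-300)*x)) hp hu
  have hid : (14*a^3-75*a^2+7*a+300)^3 * (12*((x-a)*(x-a-1))*((7*a^2-a-20)*(x-a)+7*a^3-5*a^2-56*a-80)*(3*a^4-26*a^3+51*a^2+80*a-240)-x*(15*a^4-74*a^3-45*a^2+428*a+(-14*a^3+75*a^2-7*a-300)*x)^2) = (7756053749740800000 * (a - 10) ^ 0 + 38715288855143040000 * (a - 10) ^ 1 + 63522856277449344000 * (a - 10) ^ 2 + 56881688637563596800 * (a - 10) ^ 3 + 33171056846246764800 * (a - 10) ^ 4 + 13739525976125880960 * (a - 10) ^ 5 + 4247170698312151680 * (a - 10) ^ 6 + 1009887698417958528 * (a - 10) ^ 7 + 188190792375743784 * (a - 10) ^ 8 + 27781292241230964 * (a - 10) ^ 9 + 3264048270677316 * (a - 10) ^ 10 + 304986110822544 * (a - 10) ^ 11 + 22521100562880 * (a - 10) ^ 12 + 1297536345048 * (a - 10) ^ 13 + 57078626136 * (a - 10) ^ 14 + 1850662992 * (a - 10) ^ 15 + 41658936 * (a - 10) ^ 16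 + 581076 * (a - 10) ^ 17 + 3780 * (a - 10) ^ 18) * (-(15*a^4-74*a^3-45*a^2+428*a+(-14*a^3+75*a^2-7*a-300)*x)) ^ 0 + (38144551505760000 * (a - 10) ^ 0 + 70049237947776000 * (a - 10) ^ 1 + 59246568623246400 * (a - 10) ^ 2 + 30586433268987840 * (a - 10) ^ 3 + 10766487024825360 * (a - 10) ^ 4 + 2733159205816224 * (a - 10) ^ 5 + 515944485721788 * (a - 10) ^ 6 + 73563583152732 * (a - 10) ^ 7 + 7959671707248 * (a - 10) ^ 8 + 650311249812 * (a - 10) ^ 9 + 39485918064 * (a - 10) ^ 10 + 1727586372 * (a - 10) ^ 11 + 51480336 * (a - 10) ^ 12 + 935148 * (a - 10) ^ 13 + 7812 * (a - 10) ^ 14) * (-(15*a^4-74*a^3-45*a^2+428*a+(-14*a^3+75*a^2-7*a-300)*x)) ^ 1 + (2206215630000 * (a - 10) ^ 0 + 2790100882800 * (a - 10) ^ 1 + 1570756965360 * (a - 10) ^ 2 + 518141760868 * (a - 10) ^ 3 + 110851209297 * (a - 10) ^ 4 + 16063959576 * (a - 10) ^ 5 + 1596198954 * (a - 10) ^ 6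 + 107344188 * (a - 10) ^ 7 + 4674237 * (a - 10) ^ 8 + 118976 * (a - 10) ^ 9 + 1344 * (a - 10) ^ 10) * (-(15*a^4-74*a^3-45*a^2+428*a+(-14*a^3+75*a^2-7*a-300)*x)) ^ 2 + (30469500 * (a - 10) ^ 0 + 21530700 * (a - 10) ^ 1 + 6194531 * (a - 10) ^ 2 + 927198 * (a - 10) ^ 3 + 76055 * (a - 10) ^ 4 + 3240 * (a - 10) ^ 5 + 56 * (a - 10) ^ 6) * (-(15*a^4-74*a^3-45*a^2+428*a+(-14*a^3+75*a^2-7*a-300)*x)) ^ 3 := by ring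
  have h2 : (0:ℝ) ≤ (14*a^3-75*a^2+7*a+300)^3 * (12*((x-a)*(x-a-1))*((7*a^2-a-20)*(x-a)+7*a^3-5*a^2-56*a-80)*(3*a^4-26*a^3+51*a^2+80*a-240)-x*(15*a^4-74*a^3-45*a^2+428*a+(-14*a^3+75*a^2-7*a-300)*x)^2) := by rw [hid]; exact hP
  exact posAux _ _ (pow_pos hnh 3) h2

set_option maxHeartbeats 1000000 in
private lemma KcertSmall (a x : ℝ) (ha : a = 6 ∨ a = 7 ∨ a = 8 ∨ a = 9) (hx : 11 ≤ x) :
    (0:ℝ) ≤ (12*((x-a)*(x-a-1))*((7*a^2-a-20)*(x-a)+7*a^3-5*a^2-56*a-80)*(3*a^4-26*a^3+51*a^2+80*a-240)-x*(15*a^4-74*a^3-45*a^2+428*a+(-14*a^3+75*a^2-7*a-300)*x)^2) := by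
  have hq : (0:ℝ) ≤ x - 11 := by linarith
  rcases ha with rfl | rfl | rfl | rfl <;>
    nlinarith [hq, sq_nonneg (x - 11), pow_nonneg hq 3]

private lemma geAux (a : ℝ) (ha : 6 ≤ a) : (0:ℝ) < 3*a^4-26*a^3+51*a^2+80*a-240 := by
  nlinarith [sq_nonneg (a-6), pow_nonneg (by linarith : (0:ℝ) ≤ a-6) 3,
    pow_nonneg (by linarith : (0:ℝ) ≤ a-6) 4, ha]

private lemma LAux (a x : ℝ) (ha : 6 ≤ a) (hx : 5 ≤ x) :
    (0:ℝ) ≤ (7*a^2-a-20)*(x-a)+7*a^3-5*a^2-56*a-80 := by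
  nlinarith [mul_nonneg (by nlinarith [sq_nonneg (a-6)] : (0:ℝ) ≤ 7*a^2-a-20)
    (by linarith : (0:ℝ) ≤ x - 5), sq_nonneg (a-6), ha]

private lemma quadAux (J L g s x e : ℝ) (hJ : 0 ≤ J) (hL : 0 ≤ L) (hg : 0 < g)
    (hx : 0 < x) (he : 0 ≤ e) (hK : 0 ≤ 12*J*L*g - x*s^2) :
    0 ≤ 3*J*L + e*x*s + e^2*x*g := by
  nlinarith [sq_nonneg (2*x*g*e + x*s), mul_nonneg hx.le hK, mul_pos hx hg,
    mul_nonneg (mul_nonneg hJ hL) hg.le]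

private lemma posCase (J L g s x e : ℝ) (hJ : 0 ≤ J) (hL : 0 ≤ L) (hg : 0 < g)
    (hx : 0 < x) (he : 0 ≤ e) (hs : 0 ≤ s) :
    0 ≤ 3*J*L + e*x*s + e^2*x*g :=
  add_nonneg (add_nonneg (mul_nonneg (mul_nonneg (by norm_num) hJ) hL)
    (mul_nonneg (mul_nonneg he hx.le) hs))
    (mul_nonneg (mul_nonneg (sq_nonneg _) hx.le) hg.le)

set_option maxHeartbeats 2000000 in
theorem above_line_pm_equal_degrees
    (m n : ℕ) (hm : 0 < m) (hn : 0 < n) (d : ℝ) (hd : 1 ≤ d)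
    (hint : ∃ N : ℤ, (n : ℝ) * d = (N : ℝ))
    (hcase : (10 ≤ m ∧ 5 ≤ (n : ℝ) * d) ∨
             ((m = 6 ∨ m = 7 ∨ m = 8 ∨ m = 9) ∧ 11 ≤ (n : ℝ) * d)) :
    0 ≤ kGen m * chernEq1 n d ^ 3 + bGen m * (chernEq1 n d * chernEq2 n d)
        - chernEq3 n d := by
  obtain ⟨N, hN⟩ := hint
  have hm6n : 6 ≤ m := by
    rcases hcase with ⟨h, _⟩ | ⟨h, _⟩
    · omega
    · rcases h with rfl | rfl | rfl | rfl <;> norm_num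
  have hm6 : (6:ℝ) ≤ (m:ℝ) := by exact_mod_cast hm6n
  have hx5 : (5:ℝ) ≤ ((n:ℝ)*d) := by rcases hcase with ⟨_, h⟩ | ⟨_, h⟩ <;> linarith
  have hx0 : (0:ℝ) < ((n:ℝ)*d) := by linarith
  have he : (0:ℝ) ≤ d - 1 := by linarith
  have hJ : (0:ℝ) ≤ ((((n:ℝ)*d)-(m:ℝ))*(((n:ℝ)*d)-(m:ℝ)-1)) := by
    rcases le_or_gt N (m:ℤ) with h | h
    · have h1 : ((n:ℝ)*d) ≤ (m:ℝ) := by rw [hN]; exact_mod_cast h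
      nlinarith [mul_nonneg (by linarith : (0:ℝ) ≤ (m:ℝ) - ((n:ℝ)*d))
        (by linarith : (0:ℝ) ≤ (m:ℝ) + 1 - ((n:ℝ)*d))]
    · have h1 : (m:ℝ) + 1 ≤ ((n:ℝ)*d) := by
        rw [hN]
        have h2 : (m:ℤ) + 1 ≤ N := h
        exact_mod_cast h2
      exact mul_nonneg (by linarith) (by linarith)
  have hge : (0:ℝ) < (3*(m:ℝ)^4-26*(m:ℝ)^3+51*(m:ℝ)^2+80*(m:ℝ)-240) := geAux _ hm6
  have hL : (0:ℝ) ≤ ((7*(m:ℝ)^2-(m:ℝ)-20)*(((n:ℝ)*d)-(m:ℝ))+7*(m:ℝ)^3-5*(m:ℝ)^2-56*(m:ℝ)-80) := LAux _ _ hm6 hx5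
  have key : (0:ℝ) ≤ (3*((((n:ℝ)*d)-(m:ℝ))*(((n:ℝ)*d)-(m:ℝ)-1))*((7*(m:ℝ)^2-(m:ℝ)-20)*(((n:ℝ)*d)-(m:ℝ))+7*(m:ℝ)^3-5*(m:ℝ)^2-56*(m:ℝ)-80)+(d-1)*((n:ℝ)*d)*(15*(m:ℝ)^4-74*(m:ℝ)^3-45*(m:ℝ)^2+428*(m:ℝ)+(-14*(m:ℝ)^3+75*(m:ℝ)^2-7*(m:ℝ)-300)*((n:ℝ)*d))+(d-1)^2*((n:ℝ)*d)*(3*(m:ℝ)^4-26*(m:ℝ)^3+51*(m:ℝ)^2+80*(m:ℝ)-240)) := by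
    rcases le_or_gt 0 (15*(m:ℝ)^4-74*(m:ℝ)^3-45*(m:ℝ)^2+428*(m:ℝ)+(-14*(m:ℝ)^3+75*(m:ℝ)^2-7*(m:ℝ)-300)*((n:ℝ)*d)) with hs | hs
    · exact posCase _ _ _ _ _ _ hJ hL hge hx0 he hs
    · have hK : (0:ℝ) ≤ 12*((((n:ℝ)*d)-(m:ℝ))*(((n:ℝ)*d)-(m:ℝ)-1))*((7*(m:ℝ)^2-(m:ℝ)-20)*(((n:ℝ)*d)-(m:ℝ))+7*(m:ℝ)^3-5*(m:ℝ)^2-56*(m:ℝ)-80)*(3*(m:ℝ)^4-26*(m:ℝ)^3+51*(m:ℝ)^2+80*(m:ℝ)-240) - ((n:ℝ)*d)*(15*(m:ℝ)^4-74*(m:ℝ)^3-45*(m:ℝ)^2+428*(m:ℝ)+(-14*(m:ℝ)^3+75*(m:ℝ)^2-7*(m:ℝ)-300)*((n:ℝ)*d))^2 := by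
        rcases hcase with ⟨hm10, _⟩ | ⟨hmv, hx11⟩
        · exact Kcert (m:ℝ) ((n:ℝ)*d) (by exact_mod_cast hm10) hs.le
        · refine KcertSmall (m:ℝ) ((n:ℝ)*d) ?_ hx11
          rcases hmv with rfl | rfl | rfl | rfl <;> norm_num
      exact quadAux _ _ _ _ _ _ hJ hL hge hx0 he hK
  have hDk : (0:ℝ) < ((m:ℝ)-4)*((m:ℝ)-3)*(3*(m:ℝ)^2-5*(m:ℝ)-20) := by
    have := geAux (m:ℝ) hm6
    nlinarith [this]
  have h4 : (m:ℝ) - 4 ≠ 0 := by nlinarith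
  have h3 : (m:ℝ) - 3 ≠ 0 := by nlinarith
  have hqd : 3*(m:ℝ)^2-5*(m:ℝ)-20 ≠ 0 := by nlinarith [sq_nonneg ((m:ℝ)-6)]
  have heq : kGen m * chernEq1 n d ^ 3 + bGen m * (chernEq1 n d * chernEq2 n d)
      - chernEq3 n d
      = (3*((((n:ℝ)*d)-(m:ℝ))*(((n:ℝ)*d)-(m:ℝ)-1))*((7*(m:ℝ)^2-(m:ℝ)-20)*(((n:ℝ)*d)-(m:ℝ))+7*(m:ℝ)^3-5*(m:ℝ)^2-56*(m:ℝ)-80)+(d-1)*((n:ℝ)*d)*(15*(m:ℝ)^4-74*(m:ℝ)^3-45*(m:ℝ)^2+428*(m:ℝ)+(-14*(m:ℝ)^3+75*(m:ℝ)^2-7*(m:ℝ)-300)*((n:ℝ)*d))+(d-1)^2*((n:ℝ)*d)*(3*(m:ℝ)^4-26*(m:ℝ)^3+51*(m:ℝ)^2+80*(m:ℝ)-240)) / (3*(((m:ℝ)-4)*((m:ℝ)-3)*(3*(m:ℝ)^2-5*(m:ℝ)-20))) := by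
    simp only [kGen, bGen, chernEq1, chernEq2, chernEq3]
    field_simp [show (m:ℝ)*((m:ℝ)*3-5)-20 ≠ 0 from fun h => hqd (by linear_combination h)]
    ring
  rw [heq]
  exact div_nonneg key (by linarith)
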